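/- arXiv:1312.2046 — 3 statements merged into one kernel-verified Lean document; each statement's English description precedes it below -/
import Mathlib

section
/- Let D ∈ End(R^d) with 1/2 < λ_D and Λ_D < 1. Then ∫_{0}^{∞} ||(1+u)^{D−I/2} − u^{D−I/2}||² du < ∞. -/
open MeasureTheory

noncomputable def mpow {d : ℕ} (A : Matrix (Fin d) (Fin d) ℝ) (r : ℝ) :
    Matrix (Fin d) (Fin d) ℝ :=
  NormedSpace.exp (Real.log r • A)

noncomputable def mpowPos {d : ℕ} (A : Matrix (Fin d) (Fin d) ℝ) (x : ℝ) :
    Matrix (Fin d) (Fin d) ℝ :=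
  if 0 < x then mpow A x else 0

/-- Operator norm induced by the Euclidean norm. -/
noncomputable def opN {d : ℕ} (A : Matrix (Fin d) (Fin d) ℝ) : ℝ :=
  ‖Matrix.toEuclideanCLM (𝕜 := ℝ) A‖

/-- Minimal real part of the (complex) eigenvalues. -/
noncomputable def specMin {d : ℕ} (A : Matrix (Fin d) (Fin d) ℝ) : ℝ :=
  sInf (Complex.re '' spectrum ℂ (A.map (fun x => (x : ℂ))))

/-- Maximal real part of the (complex) eigenvalues. -/
noncomputable def specMax {d : ℕ} (A : Matrix (Fin d) (Fin d) ℝ) : ℝ :=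
  sSup (Complex.re '' spectrum ℂ (A.map (fun x => (x : ℂ))))


open scoped Matrix.Norms.L2Operator
open scoped Nat
open scoped Pointwise
open NormedSpace Polynomial Matrix

section AuxMpow
variable {d : ℕ} {𝕜 : Type*} [RCLike 𝕜]



lemma coord_le_norm (x : EuclideanSpace 𝕜 (Fin d)) (i : Fin d) : ‖x i‖ ≤ ‖x‖ := by
  have h := norm_inner_le_norm (𝕜 := 𝕜) (EuclideanSpace.single i (1:𝕜)) x
  rw [EuclideanSpace.inner_single_left, EuclideanSpace.norm_single] at h
  simpa using h

lemma entry_le_norm (A : Matrix (Fin d) (Fin d) 𝕜) (i j : Fin d) : ‖A i j‖ ≤ ‖A‖ := by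
  classical
  set x : EuclideanSpace 𝕜 (Fin d) := EuclideanSpace.single j (1:𝕜)
  have h := (Matrix.toEuclideanCLM (𝕜 := 𝕜) A).le_opNorm x
  rw [EuclideanSpace.norm_single, norm_one, mul_one] at h
  have happ : Matrix.toEuclideanCLM (𝕜 := 𝕜) A x = (WithLp.equiv 2 _).symm (A *ᵥ (Pi.single j 1)) := by
    rfl
  have hcoord := coord_le_norm (Matrix.toEuclideanCLM (𝕜 := 𝕜) A x) i
  have : (Matrix.toEuclideanCLM (𝕜 := 𝕜) A x) i = A i j := by
    rw [happ]
    show (A *ᵥ (Pi.single j 1)) i = A i j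
    simp [Matrix.mulVec_single]
  rw [this] at hcoord
  rw [show ‖A‖ = ‖Matrix.toEuclideanCLM (𝕜 := 𝕜) A‖ from rfl]
  exact hcoord.trans h

lemma norm_le_sum_entries (A : Matrix (Fin d) (Fin d) 𝕜) :
    ‖A‖ ≤ ∑ i : Fin d, ∑ j : Fin d, ‖A i j‖ := by
  classical
  conv_lhs => rw [Matrix.matrix_eq_sum_single A]
  refine (norm_sum_le _ _).trans (Finset.sum_le_sum fun i _ => ?_)
  refine (norm_sum_le _ _).trans (Finset.sum_le_sum fun j _ => ?_)
  -- ‖stdBasisMatrix i j (A i j)‖ ≤ ‖A i j‖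
  rw [show ‖Matrix.single i j (A i j)‖ =
    ‖Matrix.toEuclideanCLM (𝕜 := 𝕜) (Matrix.single i j (A i j))‖ from rfl]
  refine ContinuousLinearMap.opNorm_le_bound _ (norm_nonneg _) fun x => ?_
  have : Matrix.toEuclideanCLM (𝕜 := 𝕜) (Matrix.single i j (A i j)) x =
      EuclideanSpace.single i ((A i j) * x j) := by
    apply (WithLp.equiv 2 _).injective
    show Matrix.single i j (A i j) *ᵥ (WithLp.equiv 2 _ x) = _
    rw [Matrix.single_mulVec]
    simp only [EuclideanSpace.single, Equiv.apply_symm_apply]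
    rfl
  rw [this, EuclideanSpace.norm_single, norm_mul]
  exact mul_le_mul_of_nonneg_left (coord_le_norm x j) (norm_nonneg _)



lemma exists_eigenvector (A : Matrix (Fin d) (Fin d) ℂ) {μ : ℂ}
    (h : μ ∈ spectrum ℂ A) : ∃ v : Fin d → ℂ, v ≠ 0 ∧ A *ᵥ v = μ • v := by
  rw [spectrum.mem_iff] at h
  rw [Matrix.isUnit_iff_isUnit_det, isUnit_iff_ne_zero, not_not] at h
  obtain ⟨v, hv, hv0⟩ := (Matrix.exists_mulVec_eq_zero_iff).2 h
  refine ⟨v, hv, ?_⟩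
  rw [Matrix.sub_mulVec, Algebra.algebraMap_eq_smul_one, Matrix.smul_mulVec,
    Matrix.one_mulVec, sub_eq_zero] at hv0
  exact hv0.symm

lemma pow_mulVec (A : Matrix (Fin d) (Fin d) ℂ) {μ : ℂ} {v : Fin d → ℂ}
    (h : A *ᵥ v = μ • v) (n : ℕ) : (A ^ n) *ᵥ v = (μ ^ n) • v := by
  induction n with
  | zero => simp [Matrix.one_mulVec]
  | succ n ih =>
    rw [pow_succ', pow_succ', ← Matrix.mulVec_mulVec, ih, Matrix.mulVec_smul, h, smul_smul, mul_comm]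

lemma aeval_mulVec (A : Matrix (Fin d) (Fin d) ℂ) {μ : ℂ} {v : Fin d → ℂ}
    (h : A *ᵥ v = μ • v) (p : ℂ[X]) : (aeval A p) *ᵥ v = (eval μ p) • v := by
  induction p using Polynomial.induction_on' with
  | add p q hp hq =>
    rw [map_add, Matrix.add_mulVec, hp, hq, eval_add, add_smul]
  | monomial n c =>
    rw [aeval_monomial, eval_monomial, Algebra.algebraMap_eq_smul_one, smul_mul_assoc, one_mul,
      Matrix.smul_mulVec, pow_mulVec A h, smul_smul]

lemma exp_mulVec (A : Matrix (Fin d) (Fin d) ℂ) {μ : ℂ} {v : Fin d → ℂ}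
    (h : A *ᵥ v = μ • v) : (exp A) *ᵥ v = Complex.exp μ • v := by
  classical
  let L : Matrix (Fin d) (Fin d) ℂ →ₗ[ℂ] (Fin d → ℂ) :=
    { toFun := fun M => M *ᵥ v
      map_add' := fun M N => Matrix.add_mulVec M N v
      map_smul' := fun c M => Matrix.smul_mulVec c M v }
  have hL : Continuous L := L.continuous_of_finiteDimensional
  have hsum : Summable fun n : ℕ => (n !⁻¹ : ℂ) • A ^ n := expSeries_summable' (𝕂 := ℂ) A
  have h1 : (exp A) *ᵥ v = ∑' n : ℕ, (n !⁻¹ : ℂ) • ((A ^ n) *ᵥ v) := by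
    have := (hsum.hasSum.mapL (LinearMap.toContinuousLinearMap L)).tsum_eq
    rw [exp_eq_tsum ℂ]
    refine Eq.trans ?_ this.symm |>.trans ?_
    · rfl
    · refine tsum_congr fun n => ?_
      show ((n !⁻¹ : ℂ) • A ^ n) *ᵥ v = _
      rw [Matrix.smul_mulVec]
  rw [h1]
  have h2 : ∀ n : ℕ, (n !⁻¹ : ℂ) • ((A ^ n) *ᵥ v) = ((n !⁻¹ : ℂ) * μ ^ n) • v := by
    intro n; rw [pow_mulVec A h, smul_smul]
  rw [tsum_congr h2, Summable.tsum_smul_const]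
  · congr 1
    rw [Complex.exp_eq_exp_ℂ, exp_eq_tsum ℂ]
    exact tsum_congr fun n => (smul_eq_mul _ _).symm
  · exact (expSeries_summable' (𝕂 := ℂ) μ).congr fun n => by rw [smul_eq_mul]



lemma exp_mem_adjoin (A : Matrix (Fin d) (Fin d) ℂ) :
    exp A ∈ Algebra.adjoin ℂ ({A} : Set (Matrix (Fin d) (Fin d) ℂ)) := by
  set S := Algebra.adjoin ℂ ({A} : Set (Matrix (Fin d) (Fin d) ℂ))
  have hclosed : IsClosed ((Subalgebra.toSubmodule S : Submodule ℂ _) :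
      Set (Matrix (Fin d) (Fin d) ℂ)) :=
    Submodule.closed_of_finiteDimensional (Subalgebra.toSubmodule S)
  have hsum : Summable fun n : ℕ => (n !⁻¹ : ℂ) • A ^ n := expSeries_summable' (𝕂 := ℂ) A
  have htend := hsum.hasSum.tendsto_sum_nat
  suffices h : exp A ∈ Subalgebra.toSubmodule S by exact h
  rw [exp_eq_tsum ℂ]
  refine hclosed.mem_of_tendsto htend (Filter.Eventually.of_forall fun n => ?_)
  refine Submodule.sum_mem _ fun i _ => Submodule.smul_mem _ _ ?_
  exact Subalgebra.pow_mem S (Algebra.subset_adjoin rfl) i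

lemma exp_eq_aeval (A : Matrix (Fin d) (Fin d) ℂ) : ∃ p : ℂ[X], exp A = aeval A p := by
  have h := exp_mem_adjoin A
  rw [Algebra.adjoin_singleton_eq_range_aeval] at h
  obtain ⟨p, hp⟩ := h
  exact ⟨p, hp.symm⟩

lemma spectrum_exp_eq [Nonempty (Fin d)] (A : Matrix (Fin d) (Fin d) ℂ) :
    spectrum ℂ (exp A) = Complex.exp '' spectrum ℂ A := by
  obtain ⟨p, hp⟩ := exp_eq_aeval A
  have hnon : (spectrum ℂ A).Nonempty := spectrum.nonempty A
  rw [hp, spectrum.map_polynomial_aeval_of_nonempty A p hnon]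
  refine Set.image_congr fun μ hμ => ?_
  obtain ⟨v, hv, hVec⟩ := exists_eigenvector A hμ
  have h1 : (aeval A p) *ᵥ v = (eval μ p) • v := aeval_mulVec A hVec p
  have h2 : (exp A) *ᵥ v = Complex.exp μ • v := exp_mulVec A hVec
  rw [hp, h1] at h2
  have := sub_eq_zero.mpr h2
  rw [← sub_smul] at this
  rcases smul_eq_zero.mp this with h | h
  · exact sub_eq_zero.mp h
  · exact absurd h hv

lemma norm_exp_smul_le [Nonempty (Fin d)] (A : Matrix (Fin d) (Fin d) ℂ) {c : ℝ}
    (hc : ∀ μ ∈ spectrum ℂ A, μ.re < c) :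
    ∃ C : ℝ, 0 < C ∧ ∀ t : ℝ, 0 ≤ t → ‖exp (t • A)‖ ≤ C * Real.exp (c * t) := by
  classical
  obtain ⟨μ₀, hμ₀mem, hμ₀'⟩ := (spectrum.isCompact (𝕜 := ℂ) A).exists_isMaxOn
    (spectrum.nonempty A) (Complex.continuous_re.continuousOn)
  have hμ₀ : ∀ ν ∈ spectrum ℂ A, ν.re ≤ μ₀.re := fun ν hν => hμ₀' hν
  -- spectral radius bound
  have hc' : μ₀.re < c := hc μ₀ hμ₀mem
  have hρ : spectralRadius ℂ (exp A) < ENNReal.ofReal (Real.exp c) := by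
    have hσ : spectrum ℂ (exp A) = Complex.exp '' spectrum ℂ A := spectrum_exp_eq A
    have hle : spectralRadius ℂ (exp A) ≤ ENNReal.ofReal (Real.exp μ₀.re) := by
      rw [spectralRadius]
      refine iSup₂_le fun k hk => ?_
      rw [hσ] at hk
      obtain ⟨ν, hν, rfl⟩ := hk
      have h1 : ‖Complex.exp ν‖ = Real.exp ν.re := by
        rw [Complex.norm_exp]
      rw [show ((‖Complex.exp ν‖₊ : NNReal) : ENNReal) = ENNReal.ofReal ‖Complex.exp ν‖ from
        (ofReal_norm _).symm, h1]
      exact ENNReal.ofReal_le_ofReal (Real.exp_le_exp.2 (hμ₀ ν hν))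
    refine hle.trans_lt ?_
    rw [ENNReal.ofReal_lt_ofReal_iff (Real.exp_pos c)]
    exact Real.exp_lt_exp.2 hc'
  -- Gelfand
  have htend := spectrum.pow_norm_pow_one_div_tendsto_nhds_spectralRadius (exp A)
  have hev : ∀ᶠ n : ℕ in Filter.atTop,
      ENNReal.ofReal (‖(exp A) ^ n‖ ^ (1 / (n:ℝ))) < ENNReal.ofReal (Real.exp c) :=
    htend.eventually_lt_const hρ
  obtain ⟨N, hN⟩ := Filter.eventually_atTop.mp hev
  have key : ∀ n : ℕ, N ≤ n → 1 ≤ n → ‖(exp A) ^ n‖ ≤ (Real.exp c) ^ n := by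
    intro n hn h1n
    have h := hN n hn
    rw [ENNReal.ofReal_lt_ofReal_iff (Real.exp_pos c)] at h
    have hnn : (0:ℝ) ≤ ‖(exp A) ^ n‖ := norm_nonneg _
    have hb : (0:ℝ) ≤ ‖(exp A) ^ n‖ ^ (1 / (n:ℝ)) := Real.rpow_nonneg hnn _
    have := pow_le_pow_left₀ hb h.le n
    rw [← Real.rpow_natCast (‖(exp A) ^ n‖ ^ (1 / (n:ℝ))) n, ← Real.rpow_mul hnn,
      one_div, inv_mul_cancel₀ (by exact_mod_cast Nat.one_le_iff_ne_zero.mp h1n),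
      Real.rpow_one] at this
    exact this
  -- uniform constant over all n
  set g : ℕ → ℝ := fun n => ‖(exp A) ^ n‖ / (Real.exp c) ^ n with hg
  have hgpos : ∀ n, 0 ≤ g n := fun n => div_nonneg (norm_nonneg _) (pow_nonneg (Real.exp_pos c).le n)
  set C₁ : ℝ := max 1 (((Finset.range (N+1)).image g).max' (by simp)) with hC₁
  have hC₁one : (1:ℝ) ≤ C₁ := le_max_left _ _
  have hC₁' : ∀ n : ℕ, ‖(exp A) ^ n‖ ≤ C₁ * (Real.exp c) ^ n := by
    intro n
    have hpow : (0:ℝ) < (Real.exp c) ^ n := pow_pos (Real.exp_pos c) n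
    rcases le_or_gt n N with h | h
    · have hmem : g n ∈ (Finset.range (N+1)).image g :=
        Finset.mem_image_of_mem g (Finset.mem_range.mpr (Nat.lt_succ_of_le h))
      have := Finset.le_max' _ _ hmem
      have hgn : g n ≤ C₁ := this.trans (le_max_right _ _)
      rw [hg] at hgn
      calc ‖(exp A) ^ n‖ = (‖(exp A) ^ n‖ / (Real.exp c) ^ n) * (Real.exp c) ^ n := by
            field_simp
        _ ≤ C₁ * (Real.exp c) ^ n := mul_le_mul_of_nonneg_right hgn hpow.le
    · rcases Nat.eq_zero_or_pos n with rfl | hn1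
      · exact absurd h (Nat.not_lt_zero N)
      · calc ‖(exp A) ^ n‖ ≤ (Real.exp c) ^ n := key n h.le hn1
          _ ≤ C₁ * (Real.exp c) ^ n := le_mul_of_one_le_left hpow.le hC₁one
  -- sup over [0,1]
  obtain ⟨s₀, hs₀mem, hs₀'⟩ := (isCompact_Icc (a := (0:ℝ)) (b := 1)).exists_isMaxOn
    (Set.nonempty_Icc.mpr zero_le_one)
    (((letI : NormedAlgebra ℚ (Matrix (Fin d) (Fin d) ℂ) := NormedAlgebra.restrictScalars ℚ ℂ _
      exp_continuous (𝔸 := Matrix (Fin d) (Fin d) ℂ)).comp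
      (continuous_id.smul continuous_const)).norm.continuousOn)
  have hs₀ : ∀ s ∈ Set.Icc (0:ℝ) 1, ‖exp (s • A)‖ ≤ ‖exp (s₀ • A)‖ :=
    fun s hsm => hs₀' hsm
  set M : ℝ := ‖exp (s₀ • A)‖ with hM
  have hMpos : 0 < M := by
    have h1 : ‖exp ((0:ℝ) • A)‖ ≤ M := hs₀ 0 (Set.mem_Icc.mpr ⟨le_refl _, zero_le_one⟩)
    have : exp ((0:ℝ) • A) = 1 := by rw [zero_smul, exp_zero]
    rw [this] at h1
    have h2 : (0:ℝ) < ‖(1 : Matrix (Fin d) (Fin d) ℂ)‖ := norm_pos_iff.mpr one_ne_zero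
    linarith
  refine ⟨C₁ * M * Real.exp |c|, by positivity, fun t ht => ?_⟩
  set n : ℕ := ⌊t⌋₊ with hn
  set s : ℝ := t - n with hs
  have hs0 : 0 ≤ s := by
    have := Nat.floor_le ht
    simp [hs]; linarith
  have hs1 : s ≤ 1 := by
    have := (Nat.lt_floor_add_one t).le
    simp [hs]; linarith
  have hsplit : exp (t • A) = (exp A) ^ n * exp (s • A) := by
    have h1 : t • A = (n:ℝ) • A + s • A := by
      rw [← add_smul]; congr 1; simp [hs]
    have h2 : Commute ((n:ℝ) • A) (s • A) := ((Commute.refl A).smul_left _).smul_right _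
    rw [h1, exp_add_of_commute _ _ h2]
    congr 1
    rw [Nat.cast_smul_eq_nsmul ℝ n A, Matrix.exp_nsmul]
  calc ‖exp (t • A)‖ ≤ ‖(exp A) ^ n‖ * ‖exp (s • A)‖ := by
        rw [hsplit]; exact norm_mul_le _ _
    _ ≤ (C₁ * (Real.exp c) ^ n) * M := by
        refine mul_le_mul (hC₁' n) (hs₀ s (Set.mem_Icc.mpr ⟨hs0, hs1⟩)) (norm_nonneg _) ?_
        positivity
    _ ≤ C₁ * M * Real.exp |c| * Real.exp (c * t) := by
        have hen : (Real.exp c) ^ n = Real.exp (c * n) := by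
          rw [← Real.exp_nat_mul, mul_comm]
        rw [hen]
        have h3 : Real.exp (c * n) ≤ Real.exp |c| * Real.exp (c * t) := by
          rw [← Real.exp_add]
          refine Real.exp_le_exp.2 ?_
          have h4 : c * (n:ℝ) = c * t - c * s := by rw [hs]; ring
          have h5 : -(c*s) ≤ |c| := by
            calc -(c*s) ≤ |c*s| := neg_le_abs _
              _ = |c| * |s| := abs_mul c s
              _ ≤ |c| * 1 := by
                  refine mul_le_mul_of_nonneg_left ?_ (abs_nonneg c)
                  rw [abs_le]; constructor <;> linarith
              _ = |c| := mul_one _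
          linarith
        calc C₁ * Real.exp (c * n) * M ≤ C₁ * (Real.exp |c| * Real.exp (c*t)) * M := by
              refine mul_le_mul_of_nonneg_right (mul_le_mul_of_nonneg_left h3 (by linarith)) hMpos.le
          _ = C₁ * M * Real.exp |c| * Real.exp (c * t) := by ring


lemma norm_exp_sub_one_le' (m : Matrix (Fin d) (Fin d) ℝ) :
    ‖exp m - 1‖ ≤ ‖m‖ * Real.exp ‖m‖ := by
  have hsum : Summable (fun n : ℕ => (n !⁻¹ : ℝ) • m ^ n) := expSeries_summable' (𝕂 := ℝ) m
  have hnsum : Summable (fun n : ℕ => ‖(n !⁻¹ : ℝ) • m ^ n‖) := norm_expSeries_summable' (𝕂 := ℝ) m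
  have hshift : Summable (fun n : ℕ => ‖(((n+1) !⁻¹ : ℝ)) • m ^ (n+1)‖) := by
    have := (summable_nat_add_iff 1).mpr hnsum
    exact this
  have h0 : exp m = 1 + ∑' n : ℕ, (((n+1) !⁻¹ : ℝ)) • m ^ (n+1) := by
    rw [exp_eq_tsum ℝ]
    show ∑' n : ℕ, (n !⁻¹ : ℝ) • m ^ n = _
    rw [hsum.tsum_eq_zero_add]
    congr 1
    simp
  rw [h0, add_sub_cancel_left]
  have hb : ∀ n : ℕ, ‖(((n+1) !⁻¹ : ℝ)) • m ^ (n+1)‖ ≤ ‖m‖ * ((n !⁻¹ : ℝ) * ‖m‖ ^ n) := by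
    intro n
    rw [norm_smul, Real.norm_eq_abs, abs_of_nonneg (by positivity)]
    have h1 : ‖m ^ (n+1)‖ ≤ ‖m‖ ^ (n+1) := norm_pow_le' m (Nat.succ_pos n)
    have h2 : ((n+1) !⁻¹ : ℝ) ≤ (n !⁻¹ : ℝ) := by
      rw [inv_le_inv₀ (by positivity) (by positivity)]
      exact_mod_cast Nat.factorial_le (Nat.le_succ n)
    calc ((n+1) !⁻¹ : ℝ) * ‖m ^ (n+1)‖ ≤ (n !⁻¹ : ℝ) * ‖m‖ ^ (n+1) := by
          refine mul_le_mul h2 (h1.trans_eq rfl) (norm_nonneg _) (by positivity)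
      _ = ‖m‖ * ((n !⁻¹ : ℝ) * ‖m‖ ^ n) := by ring
  have hsum2 : Summable (fun n : ℕ => ‖m‖ * ((n !⁻¹ : ℝ) * ‖m‖ ^ n)) := by
    refine Summable.mul_left _ ?_
    have := norm_expSeries_summable' (𝕂 := ℝ) (‖m‖ : ℝ)
    refine this.congr fun n => ?_
    rw [norm_smul, Real.norm_eq_abs, abs_of_nonneg (by positivity), Real.norm_eq_abs,
      abs_of_nonneg (by positivity)]
  calc ‖∑' n : ℕ, (((n+1) !⁻¹ : ℝ)) • m ^ (n+1)‖ ≤ ∑' n : ℕ, ‖(((n+1) !⁻¹ : ℝ)) • m ^ (n+1)‖ :=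
        norm_tsum_le_tsum_norm hshift
    _ ≤ ∑' n : ℕ, ‖m‖ * ((n !⁻¹ : ℝ) * ‖m‖ ^ n) := Summable.tsum_le_tsum hb hshift hsum2
    _ = ‖m‖ * ∑' n : ℕ, ((n !⁻¹ : ℝ) * ‖m‖ ^ n) := by rw [tsum_mul_left]
    _ = ‖m‖ * Real.exp ‖m‖ := by
        congr 1
        rw [Real.exp_eq_exp_ℝ, exp_eq_tsum ℝ]
        exact tsum_congr fun n => (smul_eq_mul _ _).symm


noncomputable def cm {d : ℕ} (B : Matrix (Fin d) (Fin d) ℝ) : Matrix (Fin d) (Fin d) ℂ :=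
  B.map Complex.ofReal

lemma continuous_cm : Continuous (cm (d := d)) := by
  let L : Matrix (Fin d) (Fin d) ℝ →ₗ[ℝ] Matrix (Fin d) (Fin d) ℂ :=
    { toFun := cm
      map_add' := by intro x y; ext i j; simp [cm, Matrix.map_apply]
      map_smul' := by intro c x; ext i j; simp [cm, Matrix.map_apply] }
  exact L.continuous_of_finiteDimensional

lemma cm_exp (M : Matrix (Fin d) (Fin d) ℝ) : cm (exp M) = exp (cm M) := by
  have h : cm (d := d) = ⇑((Complex.ofRealHom : ℝ →+* ℂ).mapMatrix (m := Fin d)) := by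
    funext M; ext i j; simp [cm, Matrix.map_apply]
  rw [h]
  letI : NormedAlgebra ℚ (Matrix (Fin d) (Fin d) ℝ) := NormedAlgebra.restrictScalars ℚ ℝ _
  exact map_exp _ (h ▸ continuous_cm) M

lemma cm_smul (r : ℝ) (M : Matrix (Fin d) (Fin d) ℝ) : cm (r • M) = r • cm M := by
  ext i j; simp [cm, Matrix.map_apply]

lemma opN_le_cm (M : Matrix (Fin d) (Fin d) ℝ) : opN M ≤ (d:ℝ)^2 * ‖cm M‖ := by
  have h0 : opN M = ‖M‖ := rfl
  rw [h0]
  calc ‖M‖ ≤ ∑ i, ∑ j, ‖M i j‖ := norm_le_sum_entries M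
    _ = ∑ i, ∑ j, ‖cm M i j‖ := by
        refine Finset.sum_congr rfl fun i _ => Finset.sum_congr rfl fun j _ => ?_
        simp [cm, Matrix.map_apply, Complex.norm_real]
    _ ≤ ∑ _i : Fin d, ∑ _j : Fin d, ‖cm M‖ :=
        Finset.sum_le_sum fun i _ => Finset.sum_le_sum fun j _ => entry_le_norm (cm M) i j
    _ = (d:ℝ)^2 * ‖cm M‖ := by
        simp [Finset.sum_const, Finset.card_univ]
        ring

lemma mpow_mul' (B : Matrix (Fin d) (Fin d) ℝ) {x y : ℝ} (hx : 0 < x) (hy : 0 < y) :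
    mpow B (x*y) = mpow B x * mpow B y := by
  unfold mpow
  rw [Real.log_mul hx.ne' hy.ne', add_smul,
    exp_add_of_commute _ _ (((Commute.refl B).smul_left _).smul_right _)]


end AuxMpow

set_option maxHeartbeats 2000000 in
/-- `∫_0^∞ ‖(1+u)^{D-I/2} - u^{D-I/2}‖² du < ∞`. -/
theorem mpow_increment_sq_integrable (d : ℕ) (D : Matrix (Fin d) (Fin d) ℝ)
    (hmin : 1 / 2 < specMin D) (hmax : specMax D < 1) :
    IntegrableOn
      (fun u => opN (mpow (D - (2⁻¹ : ℝ) • 1) (1 + u) - mpow (D - (2⁻¹ : ℝ) • 1) u) ^ 2)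
      (Set.Ioi (0 : ℝ)) := by
  classical
  rcases Nat.eq_zero_or_pos d with hd | hd
  · exfalso
    subst hd
    haveI : Subsingleton (Matrix (Fin 0) (Fin 0) ℂ) :=
      ⟨fun a b => by ext i j; exact i.elim0⟩
    have hempty : spectrum ℂ (D.map (fun x => (x : ℂ))) = ∅ := spectrum.of_subsingleton _
    rw [specMin, hempty, Set.image_empty, Real.sInf_empty] at hmin
    linarith
  haveI : Nonempty (Fin d) := ⟨⟨0, hd⟩⟩
  set B : Matrix (Fin d) (Fin d) ℝ := D - (2⁻¹ : ℝ) • 1 with hB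
  set Dc : Matrix (Fin d) (Fin d) ℂ := D.map (fun x => (x : ℂ)) with hDc
  set Bc : Matrix (Fin d) (Fin d) ℂ := cm B with hBc
  -- spectrum of Bc
  have hBcD : Bc = Dc - algebraMap ℂ _ (2⁻¹ : ℂ) := by
    rw [hBc, hB, hDc, Algebra.algebraMap_eq_smul_one]
    ext i j
    by_cases h : i = j <;>
      simp [cm, Matrix.map_apply, Matrix.sub_apply, Matrix.smul_apply, Matrix.one_apply, h]
  have hσBc : spectrum ℂ Bc = spectrum ℂ Dc - ({(2⁻¹ : ℂ)} : Set ℂ) := by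
    rw [hBcD, ← spectrum.sub_singleton_eq]
  -- bounds on real parts
  have hbddA : BddAbove (Complex.re '' spectrum ℂ Dc) :=
    ((spectrum.isCompact Dc).image Complex.continuous_re).bddAbove
  have hbddB : BddBelow (Complex.re '' spectrum ℂ Dc) :=
    ((spectrum.isCompact Dc).image Complex.continuous_re).bddBelow
  have hre : ∀ μ ∈ spectrum ℂ Bc,
      specMin D - 2⁻¹ ≤ μ.re ∧ μ.re ≤ specMax D - 2⁻¹ := by
    intro μ hμ
    rw [hσBc] at hμ
    rw [Set.mem_sub] at hμ
    obtain ⟨a, ha, b, hb, hab⟩ := hμ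
    rw [Set.mem_singleton_iff] at hb
    subst hb
    have hmem : a.re ∈ Complex.re '' spectrum ℂ Dc := ⟨a, ha, rfl⟩
    have h1 : specMin D ≤ a.re := csInf_le hbddB hmem
    have h2 : a.re ≤ specMax D := le_csSup hbddA hmem
    constructor
    · rw [← hab]; simp; linarith
    · rw [← hab]; simp; linarith
  set lam : ℝ := specMin D - 2⁻¹ with hlam
  set Lam : ℝ := specMax D - 2⁻¹ with hLam
  have hlam0 : 0 < lam := by rw [hlam]; linarith
  have hLam2 : Lam < 2⁻¹ := by rw [hLam]; linarith
  set cp : ℝ := (Lam + 2⁻¹)/2 with hcp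
  have hcpLam : Lam < cp := by rw [hcp]; linarith
  have hcphalf : cp < 2⁻¹ := by rw [hcp]; linarith
  set cn : ℝ := -(lam/2) with hcn
  have hcn0 : cn < 0 := by rw [hcn]; linarith
  -- apply norm growth
  obtain ⟨Cp, hCp0, hCp⟩ := norm_exp_smul_le Bc (c := cp)
    (fun μ hμ => lt_of_le_of_lt (hre μ hμ).2 hcpLam)
  obtain ⟨Cn, hCn0, hCn⟩ := norm_exp_smul_le (-Bc) (c := cn) (by
    intro μ hμ
    rw [← spectrum.neg_eq, Set.mem_neg] at hμ
    have := (hre _ hμ).1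
    have hμre : μ.re = -((-μ).re) := by simp
    rw [hμre, hcn]
    simp only [neg_lt_neg_iff]
    exact lt_of_lt_of_le (half_lt_self hlam0) this)
  -- basic bridging bound
  have hbr : ∀ x : ℝ, 0 < x →
      opN (mpow B x) ≤ (d:ℝ)^2 * ‖exp ((Real.log x) • Bc)‖ := by
    intro x hx
    have h1 : opN (mpow B x) ≤ (d:ℝ)^2 * ‖cm (exp (Real.log x • B))‖ := opN_le_cm _
    rw [cm_exp, cm_smul] at h1
    exact h1
  set Kp : ℝ := (d:ℝ)^2 * Cp with hKp
  set Kn : ℝ := (d:ℝ)^2 * Cn with hKn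
  have hd1 : (1:ℝ) ≤ (d:ℝ)^2 := by
    have : (1:ℝ) ≤ (d:ℝ) := by exact_mod_cast hd
    nlinarith
  have hKp0 : 0 < Kp := by rw [hKp]; positivity
  have hKn0 : 0 < Kn := by rw [hKn]; positivity
  -- upper bound for x ≥ 1
  have hub : ∀ x : ℝ, 1 ≤ x → opN (mpow B x) ≤ Kp * x ^ cp := by
    intro x hx
    have hx0 : (0:ℝ) < x := lt_of_lt_of_le one_pos hx
    have hlog : 0 ≤ Real.log x := Real.log_nonneg hx
    have h2 := hCp (Real.log x) hlog
    have h3 : Real.exp (cp * Real.log x) = x ^ cp := by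
      rw [Real.rpow_def_of_pos hx0, mul_comm]
    calc opN (mpow B x) ≤ (d:ℝ)^2 * ‖exp ((Real.log x) • Bc)‖ := hbr x hx0
      _ ≤ (d:ℝ)^2 * (Cp * Real.exp (cp * Real.log x)) := by
          refine mul_le_mul_of_nonneg_left h2 (by positivity)
      _ = Kp * x ^ cp := by rw [h3, hKp]; ring
  -- bound on (0, 1]
  have hlb : ∀ x : ℝ, 0 < x → x ≤ 1 → opN (mpow B x) ≤ Kn := by
    intro x hx0 hx1
    have hlog : Real.log x ≤ 0 := Real.log_nonpos hx0.le hx1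
    have hsm : (Real.log x) • Bc = (-Real.log x) • (-Bc) := by
      rw [smul_neg, neg_smul, neg_neg]
    have h2 := hCn (-Real.log x) (by linarith)
    have h3 : Real.exp (cn * -Real.log x) ≤ 1 := by
      rw [Real.exp_le_one_iff]
      have : 0 ≤ -Real.log x := by linarith
      nlinarith
    calc opN (mpow B x) ≤ (d:ℝ)^2 * ‖exp ((Real.log x) • Bc)‖ := hbr x hx0
      _ = (d:ℝ)^2 * ‖exp ((-Real.log x) • (-Bc))‖ := by rw [hsm]
      _ ≤ (d:ℝ)^2 * (Cn * Real.exp (cn * -Real.log x)) := by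
          refine mul_le_mul_of_nonneg_left h2 (by positivity)
      _ ≤ Kn := by
          rw [hKn]
          have := mul_le_mul_of_nonneg_left h3 hCn0.le
          nlinarith
  -- difference bound for u ≥ 1
  set KB : ℝ := ‖B‖ * Real.exp ‖B‖ with hKB
  have hKB0 : 0 ≤ KB := by rw [hKB]; positivity
  have hdiff : ∀ u : ℝ, 1 ≤ u →
      opN (mpow B (1+u) - mpow B u) ≤ (Kp * KB) * u ^ (cp - 1) := by
    intro u hu
    have hu0 : (0:ℝ) < u := lt_of_lt_of_le one_pos hu
    set s : ℝ := 1 + 1/u with hs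
    have hs1 : 1 < s := by
      rw [hs]; have : 0 < 1/u := by positivity
      linarith
    have hs0 : (0:ℝ) < s := by linarith
    have hus : u * s = 1 + u := by rw [hs]; field_simp; try ring
    have hsplit : mpow B (1+u) = mpow B u * mpow B s := by
      rw [← hus]; exact mpow_mul' B hu0 hs0
    have hfact : mpow B (1+u) - mpow B u = mpow B u * (mpow B s - 1) := by
      rw [hsplit, mul_sub, mul_one]
    have hlogs0 : 0 ≤ Real.log s := Real.log_nonneg hs1.le
    have hlogs : Real.log s ≤ 1/u := by
      have := Real.log_le_sub_one_of_pos hs0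
      rw [hs] at this ⊢
      linarith
    have hlogs1 : Real.log s ≤ 1 := by
      have : 1/u ≤ 1 := by
        rw [div_le_one hu0]; exact hu
      linarith
    have hnorm_smul : ‖Real.log s • B‖ = Real.log s * ‖B‖ := by
      rw [norm_smul, Real.norm_eq_abs, abs_of_nonneg hlogs0]
    have h4 : ‖mpow B s - 1‖ ≤ (1/u) * KB := by
      have h5 : ‖mpow B s - (1 : Matrix (Fin d) (Fin d) ℝ)‖ ≤
          ‖Real.log s • B‖ * Real.exp ‖Real.log s • B‖ := norm_exp_sub_one_le' _
      rw [hnorm_smul] at h5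
      have h6 : Real.exp (Real.log s * ‖B‖) ≤ Real.exp ‖B‖ := by
        refine Real.exp_le_exp.2 ?_
        nlinarith [norm_nonneg B]
      calc ‖mpow B s - (1 : Matrix (Fin d) (Fin d) ℝ)‖
          ≤ Real.log s * ‖B‖ * Real.exp (Real.log s * ‖B‖) := h5
        _ ≤ (1/u) * ‖B‖ * Real.exp ‖B‖ := by
            have h7 : Real.log s * ‖B‖ ≤ (1/u) * ‖B‖ :=
              mul_le_mul_of_nonneg_right hlogs (norm_nonneg _)
            have h8 : 0 ≤ Real.log s * ‖B‖ := by positivity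
            nlinarith [Real.exp_pos (Real.log s * ‖B‖), Real.exp_pos ‖B‖,
              Real.exp_le_exp.2 (le_refl ‖B‖)]
        _ = (1/u) * KB := by rw [hKB]; ring
    have hop : opN (mpow B (1+u) - mpow B u) ≤ opN (mpow B u) * ‖mpow B s - 1‖ := by
      show ‖mpow B (1+u) - mpow B u‖ ≤ ‖mpow B u‖ * ‖mpow B s - 1‖
      rw [hfact]
      exact norm_mul_le _ _
    calc opN (mpow B (1+u) - mpow B u) ≤ opN (mpow B u) * ‖mpow B s - 1‖ := hop
      _ ≤ (Kp * u ^ cp) * ((1/u) * KB) := by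
          refine mul_le_mul (hub u hu) h4 (norm_nonneg _) ?_
          have : (0:ℝ) ≤ opN (mpow B u) := norm_nonneg _
          positivity
      _ = (Kp * KB) * (u ^ cp * u⁻¹) := by ring
      _ = (Kp * KB) * u ^ (cp - 1) := by
          congr 1
          rw [Real.rpow_sub hu0, Real.rpow_one, div_eq_mul_inv]
  -- continuity / measurability
  have hcont : ContinuousOn
      (fun u : ℝ => opN (mpow B (1 + u) - mpow B u) ^ 2) (Set.Ioi (0:ℝ)) := by
    have hmp : ∀ (f : ℝ → ℝ), ContinuousOn f (Set.Ioi (0:ℝ)) →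
        (∀ u ∈ Set.Ioi (0:ℝ), f u ≠ 0) →
        ContinuousOn (fun u => mpow B (f u)) (Set.Ioi (0:ℝ)) := by
      intro f hf hf0
      have h1 : ContinuousOn (fun u => Real.log (f u) • B) (Set.Ioi (0:ℝ)) := by
        refine ContinuousOn.smul (f := fun u => Real.log (f u)) (g := fun _ => B) ?_ continuousOn_const
        exact Real.continuousOn_log.comp hf fun u hu => hf0 u hu
      exact (letI : NormedAlgebra ℚ (Matrix (Fin d) (Fin d) ℝ) := NormedAlgebra.restrictScalars ℚ ℝ _
        exp_continuous (𝔸 := Matrix (Fin d) (Fin d) ℝ)).comp_continuousOn h1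
    have h2 : ContinuousOn (fun u : ℝ => mpow B (1 + u)) (Set.Ioi (0:ℝ)) :=
      hmp (fun u => 1 + u) (continuousOn_const.add continuousOn_id)
        (fun u hu => by have := Set.mem_Ioi.1 hu; positivity)
    have h3 : ContinuousOn (fun u : ℝ => mpow B u) (Set.Ioi (0:ℝ)) :=
      hmp id continuousOn_id (fun u hu => (Set.mem_Ioi.1 hu).ne')
    have h4 : ContinuousOn (fun u : ℝ => mpow B (1+u) - mpow B u) (Set.Ioi (0:ℝ)) := h2.sub h3
    exact (h4.norm).pow 2
  -- split domain
  rw [← Set.Ioc_union_Ioi_eq_Ioi (zero_le_one (α := ℝ))]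
  refine MeasureTheory.IntegrableOn.union ?_ ?_
  · -- on Ioc 0 1 : bounded by constant
    refine MeasureTheory.Integrable.mono'
      (g := fun _ : ℝ => (Kn + 2*Kp)^2)
      (MeasureTheory.integrableOn_const measure_Ioc_lt_top.ne) ?_ ?_
    · exact (hcont.mono Set.Ioc_subset_Ioi_self).aestronglyMeasurable measurableSet_Ioc
    · rw [MeasureTheory.ae_restrict_iff' measurableSet_Ioc]
      refine MeasureTheory.ae_of_all _ fun u hu => ?_
      obtain ⟨hu0, hu1⟩ := hu
      have hb1 : opN (mpow B (1+u)) ≤ 2*Kp := by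
        have h5 := hub (1+u) (by linarith)
        have h6 : (1+u) ^ cp ≤ 2 := by
          calc (1+u) ^ cp ≤ (1+u) ^ (1:ℝ) := by
                refine Real.rpow_le_rpow_of_exponent_le (by linarith) (by linarith)
            _ = 1 + u := Real.rpow_one _
            _ ≤ 2 := by linarith
        calc opN (mpow B (1+u)) ≤ Kp * (1+u) ^ cp := h5
          _ ≤ Kp * 2 := mul_le_mul_of_nonneg_left h6 hKp0.le
          _ = 2*Kp := by ring
      have hb2 : opN (mpow B u) ≤ Kn := hlb u hu0 hu1
      have hb3 : opN (mpow B (1+u) - mpow B u) ≤ Kn + 2*Kp := by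
        have h9 : opN (mpow B (1+u) - mpow B u) ≤ opN (mpow B (1+u)) + opN (mpow B u) :=
          norm_sub_le (mpow B (1+u)) (mpow B u)
        linarith
      have hnn : (0:ℝ) ≤ opN (mpow B (1+u) - mpow B u) := norm_nonneg _
      rw [Real.norm_eq_abs, abs_of_nonneg (by positivity)]
      exact pow_le_pow_left₀ hnn hb3 2
  · -- on Ioi 1 : compare with rpow
    have hexp : 2*cp - 2 < -1 := by linarith
    have hint : MeasureTheory.IntegrableOn (fun u : ℝ => u ^ (2*cp - 2)) (Set.Ioi (1:ℝ)) :=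
      integrableOn_Ioi_rpow_of_lt hexp one_pos
    refine MeasureTheory.Integrable.mono'
      (g := fun u : ℝ => (Kp*KB)^2 * u ^ (2*cp - 2)) (hint.const_mul _) ?_ ?_
    · exact (hcont.mono fun x (hx : x ∈ Set.Ioi (1:ℝ)) => Set.mem_Ioi.2 (lt_trans one_pos hx)).aestronglyMeasurable measurableSet_Ioi
    · rw [MeasureTheory.ae_restrict_iff' measurableSet_Ioi]
      refine MeasureTheory.ae_of_all _ fun u hu => ?_
      have hu1 : (1:ℝ) ≤ u := (Set.mem_Ioi.1 hu).le
      have hu0 : (0:ℝ) < u := lt_of_lt_of_le one_pos hu1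
      have h5 := hdiff u hu1
      have hnn : (0:ℝ) ≤ opN (mpow B (1+u) - mpow B u) := norm_nonneg _
      rw [Real.norm_eq_abs, abs_of_nonneg (by positivity)]
      calc opN (mpow B (1+u) - mpow B u) ^ 2 ≤ ((Kp*KB) * u ^ (cp-1)) ^ 2 := by
            refine pow_le_pow_left₀ hnn h5 2
        _ = (Kp*KB)^2 * (u ^ (cp-1))^2 := by ring
        _ = (Kp*KB)^2 * u ^ (2*cp - 2) := by
            congr 1
            rw [← Real.rpow_natCast (u ^ (cp-1)) 2, ← Real.rpow_mul hu0.le]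
            norm_num
            ring_nf
end

section
/- Let D ∈ End(R^d) and 0 ≤ s̃ < t̃. Then ∫_0^{s̃} ||(t̃ − u)^{D−I/2} − (s̃ − u)^{D−I/2}||² du ≤ ||(t̃ − s̃)^{D−I/2}||² (t̃ − s̃) ∫_0^∞ ||(1+u)^{D−I/2} − u^{D−I/2}||² du. -/
open MeasureTheory

lemma mpow_mul_pos {d : ℕ} (A : Matrix (Fin d) (Fin d) ℝ) {a b : ℝ} (ha : 0 < a) (hb : 0 < b) :
    mpow A (a * b) = mpow A a * mpow A b := by
  unfold mpow
  rw [Real.log_mul ha.ne' hb.ne', add_smul]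
  exact Matrix.exp_add_of_commute _ _ (((Commute.refl A).smul_left _).smul_right _)

lemma opN_nonneg {d : ℕ} (A : Matrix (Fin d) (Fin d) ℝ) : 0 ≤ opN A := norm_nonneg _

lemma opN_mul_le {d : ℕ} (A B : Matrix (Fin d) (Fin d) ℝ) : opN (A * B) ≤ opN A * opN B := by
  unfold opN
  rw [map_mul]
  exact norm_mul_le _ _

/-- scaling bound for the integral of squared kernel increments,
stated with lower integrals so that the right-hand side may be infinite. -/
theorem kernel_increment_scaling (d : ℕ) (D : Matrix (Fin d) (Fin d) ℝ)
    (s t : ℝ) (hs : 0 ≤ s) (hst : s < t) :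
    (∫⁻ u in Set.Ioc (0 : ℝ) s, ENNReal.ofReal
        (opN (mpow (D - (2⁻¹ : ℝ) • 1) (t - u) - mpow (D - (2⁻¹ : ℝ) • 1) (s - u)) ^ 2))
      ≤ ENNReal.ofReal (opN (mpow (D - (2⁻¹ : ℝ) • 1) (t - s)) ^ 2 * (t - s)) *
        ∫⁻ u in Set.Ioi (0 : ℝ), ENNReal.ofReal
          (opN (mpow (D - (2⁻¹ : ℝ) • 1) (1 + u) - mpow (D - (2⁻¹ : ℝ) • 1) u) ^ 2) := by
  set A := D - (2⁻¹ : ℝ) • (1 : Matrix (Fin d) (Fin d) ℝ) with hA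
  have hc0 : 0 < t - s := sub_pos.2 hst
  set c : ℝ := t - s with hc
  set G : ℝ → ENNReal := fun u => ENNReal.ofReal (opN (mpow A (1 + u) - mpow A u) ^ 2) with hG
  set C : ENNReal := ENNReal.ofReal (opN (mpow A c) ^ 2) with hC
  have hCne : C ≠ ⊤ := ENNReal.ofReal_ne_top
  have hcne : -c⁻¹ ≠ 0 := neg_ne_zero.2 (inv_ne_zero hc0.ne')
  set e : ℝ ≃ₜ ℝ := affineHomeomorph (-c⁻¹) (s / c) hcne with he
  have heval : ∀ u : ℝ, e u = (s - u) / c := by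
    intro u
    show -c⁻¹ * u + s / c = (s - u) / c
    field_simp
    ring
  -- pointwise bound
  have key : ∀ u ∈ Set.Ioo (0 : ℝ) s,
      ENNReal.ofReal (opN (mpow A (t - u) - mpow A (s - u)) ^ 2) ≤ C * G (e u) := by
    intro u hu
    have hv : 0 < (s - u) / c := div_pos (sub_pos.2 hu.2) hc0
    have h1 : t - u = c * (1 + (s - u) / c) := by field_simp; ring
    have h2 : s - u = c * ((s - u) / c) := by field_simp
    have hm1 : mpow A (t - u) = mpow A c * mpow A (1 + (s - u) / c) := by
      rw [h1]; exact mpow_mul_pos A hc0 (by positivity)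
    have hm2 := mpow_mul_pos A hc0 hv
    rw [← h2] at hm2
    calc ENNReal.ofReal (opN (mpow A (t - u) - mpow A (s - u)) ^ 2)
        = ENNReal.ofReal (opN (mpow A c *
            (mpow A (1 + (s - u) / c) - mpow A ((s - u) / c))) ^ 2) := by
          rw [hm1, hm2, mul_sub]
      _ ≤ ENNReal.ofReal ((opN (mpow A c) *
            opN (mpow A (1 + (s - u) / c) - mpow A ((s - u) / c))) ^ 2) :=
          ENNReal.ofReal_le_ofReal (pow_le_pow_left₀ (opN_nonneg _) (opN_mul_le _ _) 2)
      _ = C * G (e u) := by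
          rw [heval u, hG, hC, mul_pow, ENNReal.ofReal_mul (by positivity)]
  -- preimage computation
  have hpre : (⇑e) ⁻¹' Set.Ioo (0 : ℝ) (s / c) = Set.Ioo (0 : ℝ) s := by
    ext u
    simp only [Set.mem_preimage, Set.mem_Ioo, heval u]
    constructor
    · rintro ⟨h1, h2⟩
      have e1 : (s - u) / c * c = s - u := div_mul_cancel₀ _ hc0.ne'
      have e2 : s / c * c = s := div_mul_cancel₀ _ hc0.ne'
      constructor
      · nlinarith [mul_lt_mul_of_pos_right h2 hc0]
      · nlinarith [mul_pos h1 hc0]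
    · rintro ⟨h1, h2⟩
      refine ⟨div_pos (sub_pos.2 h2) hc0, ?_⟩
      gcongr
      linarith
  -- measure computation
  have hmap : Measure.map (⇑e) (volume.restrict (Set.Ioo (0 : ℝ) s)) =
      ENNReal.ofReal c • volume.restrict (Set.Ioo (0 : ℝ) (s / c)) := by
    have hcomp : (⇑e) = (fun x => x + s / c) ∘ (fun x : ℝ => -c⁻¹ * x) := rfl
    have h1 : Measure.map (⇑e) volume = ENNReal.ofReal c • volume := by
      rw [hcomp, ← Measure.map_map (measurable_add_const _) (measurable_const_mul _),
        Real.map_volume_mul_left hcne, Measure.map_smul, map_add_right_eq_self]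
      congr 1
      rw [inv_neg, inv_inv, abs_neg, abs_of_pos hc0]
    rw [← hpre, ← e.measurableEmbedding.restrict_map, h1, Measure.restrict_smul]
  calc (∫⁻ u in Set.Ioc (0 : ℝ) s,
        ENNReal.ofReal (opN (mpow A (t - u) - mpow A (s - u)) ^ 2))
      = ∫⁻ u in Set.Ioo (0 : ℝ) s,
          ENNReal.ofReal (opN (mpow A (t - u) - mpow A (s - u)) ^ 2) := by
        rw [MeasureTheory.restrict_Ioo_eq_restrict_Ioc]
    _ ≤ ∫⁻ u in Set.Ioo (0 : ℝ) s, C * G (e u) :=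
        lintegral_mono_ae ((ae_restrict_iff' measurableSet_Ioo).2 (ae_of_all _ key))
    _ = C * ∫⁻ u in Set.Ioo (0 : ℝ) s, G (e u) := lintegral_const_mul' _ _ hCne
    _ = C * ∫⁻ x, G x ∂(Measure.map (⇑e) (volume.restrict (Set.Ioo (0 : ℝ) s))) := by
        rw [e.measurableEmbedding.lintegral_map]
    _ = C * (ENNReal.ofReal c * ∫⁻ x in Set.Ioo (0 : ℝ) (s / c), G x) := by
        rw [hmap, lintegral_smul_measure, smul_eq_mul]
    _ ≤ C * (ENNReal.ofReal c * ∫⁻ x in Set.Ioi (0 : ℝ), G x) := by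
        gcongr
        exact Set.Ioo_subset_Ioi_self
    _ = ENNReal.ofReal (opN (mpow A c) ^ 2 * c) * ∫⁻ x in Set.Ioi (0 : ℝ), G x := by
        rw [ENNReal.ofReal_mul (by positivity), ← mul_assoc]
end

section
/- Let D be a linear operator on R^d with 1/2 < λ_D and Λ_D < 1, and let W be a standard d-dimensional Brownian motion. Then the process X(t) = ∫_0^t (t−u)^{D − I/2} dW(u), t ≥ 0, is operator self-similar with exponent D: for every c > 0, the process (X(ct))_{t≥0} has the same finite-dimensional distributions as (c^D X(t))_{t≥0}. -/
open MeasureTheory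

open ProbabilityTheory Matrix Complex Filter
open scoped RealInnerProductSpace Topology

section CW

section CW
variable {ι : Type*} [Fintype ι]

local notation "V" => EuclideanSpace ℝ ι

lemma cw_gauss_repr {b : ℝ} (hb : 0 < b) (w : V) :
    (Real.exp (-b * ‖w‖ ^ 2) : ℂ) =
      ((Real.pi / ((1 : ℂ) / (4 * b)) : ℂ) ^ ((Module.finrank ℝ V : ℂ) / 2))⁻¹ *
        ∫ v : V, cexp (-((1 : ℂ) / (4 * b)) * ‖v‖ ^ 2 + Complex.I * (⟪w, v⟫ : ℝ)) := by
  have hA : (0 : ℝ) < ((1 : ℂ) / (4 * b)).re := by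
    norm_num
    positivity
  have h := GaussianFourier.integral_cexp_neg_mul_sq_norm_add (b := (1 : ℂ) / (4 * b)) hA
    Complex.I w
  rw [h]
  have h4b : (4 * (b : ℂ)) ≠ 0 := by
    have : (4 * b : ℝ) ≠ 0 := by positivity
    exact_mod_cast this
  have hKne : ((Real.pi / ((1 : ℂ) / (4 * b)) : ℂ) ^ ((Module.finrank ℝ V : ℂ) / 2)) ≠ 0 := by
    rw [Ne, Complex.cpow_eq_zero_iff]
    push_neg
    intro h0
    exact absurd h0 (div_ne_zero (by exact_mod_cast Real.pi_ne_zero) (one_div_ne_zero h4b))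
  rw [inv_mul_cancel_left₀ hKne]
  rw [Complex.I_sq]
  push_cast
  field_simp

lemma cw_char_eq {μ ν : Measure V}
    (h : ∀ a : V, μ.map (fun x => ⟪a, x⟫) = ν.map (fun x => ⟪a, x⟫)) (a : V) :
    ∫ x, cexp (Complex.I * (⟪a, x⟫ : ℝ)) ∂μ = ∫ x, cexp (Complex.I * (⟪a, x⟫ : ℝ)) ∂ν := by
  have hm : Measurable fun x : V => ⟪a, x⟫ := (continuous_const.inner continuous_id).measurable
  have key : ∀ ρ : Measure V, ∫ x, cexp (Complex.I * (⟪a, x⟫ : ℝ)) ∂ρ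
      = ∫ s : ℝ, cexp (Complex.I * s) ∂(ρ.map (fun x => ⟪a, x⟫)) := fun ρ =>
    (integral_map hm.aemeasurable
      ((continuous_const.mul Complex.continuous_ofReal).cexp.aestronglyMeasurable)).symm
  rw [key μ, key ν, h a]

lemma cw_integral_ofReal {α : Type*} [MeasurableSpace α] {μ : Measure α} (f : α → ℝ) :
    ∫ x, ((f x : ℝ) : ℂ) ∂μ = ((∫ x, f x ∂μ : ℝ) : ℂ) := integral_ofReal

lemma cw_gauss_eq {μ ν : Measure V} [IsProbabilityMeasure μ] [IsProbabilityMeasure ν]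
    (h : ∀ a : V, μ.map (fun x => ⟪a, x⟫) = ν.map (fun x => ⟪a, x⟫))
    {b : ℝ} (hb : 0 < b) (z : V) :
    ∫ x, Real.exp (-b * ‖z - x‖ ^ 2) ∂μ = ∫ x, Real.exp (-b * ‖z - x‖ ^ 2) ∂ν := by
  have hA : (0 : ℝ) < ((1 : ℂ) / (4 * b)).re := by norm_num; positivity
  set A : ℂ := (1 : ℂ) / (4 * b) with hAdef
  have hAre : A.re = 1 / (4 * b) := by
    rw [hAdef]
    norm_num
  have hAim : A.im = 0 := by
    rw [hAdef]
    norm_num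
  set K : ℂ := ((Real.pi / A : ℂ) ^ ((Module.finrank ℝ V : ℂ) / 2)) with hKdef
  have hg : Integrable (fun v : V => Real.exp (-(1 / (4 * b)) * ‖v‖ ^ 2)) volume := by
    have h0 := (GaussianFourier.integrable_cexp_neg_mul_sq_norm_add (b := A) hA 0 (0 : V)).norm
    apply h0.congr
    refine Eventually.of_forall fun v => ?_
    simp [Complex.norm_exp, Complex.add_re, Complex.neg_re, Complex.mul_re, hAre, hAim,
      Complex.ofReal_re, Complex.ofReal_im, ← Complex.ofReal_pow]
  -- the key computation, for any probability measure
  have key : ∀ ρ : Measure V, IsProbabilityMeasure ρ →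
      (∫ x, ((Real.exp (-b * ‖z - x‖ ^ 2) : ℝ) : ℂ) ∂ρ)
        = K⁻¹ * ∫ v : V, (cexp (-A * ‖v‖ ^ 2 + Complex.I * (⟪z, v⟫ : ℝ)) *
            ∫ x, cexp (Complex.I * (⟪-v, x⟫ : ℝ)) ∂ρ) := by
    intro ρ hρ
    have e1 : ∀ x : V, ((Real.exp (-b * ‖z - x‖ ^ 2) : ℝ) : ℂ)
        = K⁻¹ * ∫ v : V, cexp (-A * ‖v‖ ^ 2 + Complex.I * (⟪z - x, v⟫ : ℝ)) := fun x =>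
      cw_gauss_repr hb (z - x)
    rw [integral_congr_ae (Eventually.of_forall e1), integral_const_mul]
    congr 1
    -- Fubini
    have hint : Integrable (Function.uncurry fun x v : V =>
        cexp (-A * ‖v‖ ^ 2 + Complex.I * (⟪z - x, v⟫ : ℝ))) (ρ.prod volume) := by
      have hcont : Continuous fun p : V × V =>
          cexp (-A * ‖p.2‖ ^ 2 + Complex.I * (⟪z - p.1, p.2⟫ : ℝ)) := by
        apply Complex.continuous_exp.comp
        apply Continuous.add
        · exact (continuous_const.mul ((Complex.continuous_ofReal.comp
            continuous_snd.norm).pow 2))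
        · exact continuous_const.mul (Complex.continuous_ofReal.comp
            ((continuous_const.sub continuous_fst).inner continuous_snd))
      have hprod : Integrable (fun p : V × V =>
          (1 : ℝ) * Real.exp (-(1 / (4 * b)) * ‖p.2‖ ^ 2)) (ρ.prod volume) :=
        (integrable_const (1 : ℝ)).mul_prod hg
      apply Integrable.mono' (by simpa using hprod) hcont.aestronglyMeasurable
      refine Eventually.of_forall fun p => ?_
      simp [Function.uncurry, Complex.norm_exp, Complex.add_re, Complex.neg_re, Complex.mul_re,
        hAre, hAim, Complex.ofReal_re, Complex.ofReal_im, ← Complex.ofReal_pow]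
    rw [MeasureTheory.integral_integral_swap hint]
    apply integral_congr_ae (Eventually.of_forall fun v => ?_)
    have e2 : ∀ x : V, cexp (-A * ‖v‖ ^ 2 + Complex.I * (⟪z - x, v⟫ : ℝ))
        = cexp (-A * ‖v‖ ^ 2 + Complex.I * (⟪z, v⟫ : ℝ)) * cexp (Complex.I * (⟪-v, x⟫ : ℝ)) := by
      intro x
      rw [← Complex.exp_add]
      congr 1
      have : ⟪z - x, v⟫ = ⟪z, v⟫ + ⟪-v, x⟫ := by
        rw [inner_sub_left, inner_neg_left, real_inner_comm v x]
        ring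
      rw [this]
      push_cast
      ring
    rw [integral_congr_ae (Eventually.of_forall e2), integral_const_mul]
  have hCeq : ∫ x, ((Real.exp (-b * ‖z - x‖ ^ 2) : ℝ) : ℂ) ∂μ
      = ∫ x, ((Real.exp (-b * ‖z - x‖ ^ 2) : ℝ) : ℂ) ∂ν := by
    rw [key μ ‹_›, key ν ‹_›]
    congr 1
    apply integral_congr_ae (Eventually.of_forall fun v => ?_)
    rw [cw_char_eq h (-v)]
  rw [cw_integral_ofReal, cw_integral_ofReal] at hCeq
  exact_mod_cast hCeq

lemma cw_integral_bcf_eq {μ ν : Measure V} [IsProbabilityMeasure μ] [IsProbabilityMeasure ν]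
    (h : ∀ a : V, μ.map (fun x => ⟪a, x⟫) = ν.map (fun x => ⟪a, x⟫))
    (f : BoundedContinuousFunction (EuclideanSpace ℝ ι) ℝ) : ∫ x, f x ∂μ = ∫ x, f x ∂ν := by
  set k : V → ℝ := fun v => Real.exp (-(1 / 2 : ℝ) * ‖v‖ ^ 2) with hk
  have hkcont : Continuous k :=
    Real.continuous_exp.comp (continuous_const.mul (continuous_norm.pow 2))
  have hknonneg : ∀ v, 0 ≤ k v := fun v => (Real.exp_pos _).le
  have hkint : Integrable k (volume : Measure V) := by
    have h0 := (GaussianFourier.integrable_cexp_neg_mul_sq_norm_add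
      (b := (((1 / 2 : ℝ) : ℂ))) (by norm_num) 0 (0 : V)).norm
    apply h0.congr
    refine Filter.Eventually.of_forall fun v => ?_
    simp [Complex.norm_exp, ← Complex.ofReal_pow, ← Complex.ofReal_mul, ← Complex.ofReal_neg, hk]
  set Z : ℝ := ∫ v : V, k v with hZdef
  have hZ : Z = (Real.pi / (1 / 2 : ℝ)) ^ ((Module.finrank ℝ V : ℝ) / 2) :=
    GaussianFourier.integral_rexp_neg_mul_sq_norm (by norm_num)
  have hZpos : 0 < Z := by
    rw [hZ]
    exact Real.rpow_pos_of_pos (by positivity) _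
  -- change of variables for the inner integral
  have hcov : ∀ ε : ℝ, 0 < ε → ∀ x : V, (∫ v : V, f (x + ε • v) * k v)
      = |(ε ^ Module.finrank ℝ V)⁻¹| • ∫ y : V, f y * k (ε⁻¹ • (y - x)) := by
    intro ε hε x
    have h1' := Measure.integral_comp_smul (volume : Measure V)
      (fun w => (f : V → ℝ) (x + w) * k (ε⁻¹ • w)) ε
    simp only [smul_smul, inv_mul_cancel₀ hε.ne', one_smul] at h1'
    rw [h1']
    have h2' := integral_add_left_eq_self (μ := (volume : Measure V))
      (fun y => (f : V → ℝ) y * k (ε⁻¹ • (y - x))) x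
    simp only [add_sub_cancel_left] at h2'
    rw [h2']
  -- integrability and value of the shifted kernel
  have hsect : ∀ (ε : ℝ), ε ≠ 0 → ∀ x : V,
      Integrable (fun y => k (ε⁻¹ • (y - x))) (volume : Measure V) :=
    fun ε hε x => (hkint.comp_smul (inv_ne_zero hε)).comp_sub_right x
  have hval : ∀ (ε : ℝ), ε ≠ 0 → ∀ x : V,
      ∫ y : V, k (ε⁻¹ • (y - x)) = |((ε⁻¹) ^ Module.finrank ℝ V)⁻¹| • Z := by
    intro ε hε x
    have e1 := integral_sub_right_eq_self (μ := (volume : Measure V))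
      (fun w : V => k (ε⁻¹ • w)) x
    have e2 := Measure.integral_comp_smul (volume : Measure V) k ε⁻¹
    rw [e1, e2, hZdef]
  -- the mollified integrals agree
  have hJeq : ∀ ε : ℝ, 0 < ε →
      ∫ x, (∫ v : V, f (x + ε • v) * k v) ∂μ = ∫ x, (∫ v : V, f (x + ε • v) * k v) ∂ν := by
    intro ε hε
    have hb' : (0 : ℝ) < ε⁻¹ ^ 2 / 2 := by positivity
    have hker : ∀ x y : V, k (ε⁻¹ • (y - x)) = Real.exp (-(ε⁻¹ ^ 2 / 2) * ‖y - x‖ ^ 2) := by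
      intro x y
      simp only [hk, norm_smul, Real.norm_eq_abs, mul_pow, _root_.sq_abs]
      ring_nf
    have key : ∀ ρ : Measure V, IsProbabilityMeasure ρ →
        ∫ x, (∫ v : V, f (x + ε • v) * k v) ∂ρ
          = |(ε ^ Module.finrank ℝ V)⁻¹| • ∫ y : V, (f y *
              ∫ x, Real.exp (-(ε⁻¹ ^ 2 / 2) * ‖y - x‖ ^ 2) ∂ρ) := by
      intro ρ hρ
      rw [integral_congr_ae (Filter.Eventually.of_forall fun x => hcov ε hε x), integral_smul]
      congr 1
      have hFcont : Continuous fun p : V × V => f p.2 * k (ε⁻¹ • (p.2 - p.1)) :=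
        (f.continuous.comp continuous_snd).mul
          (hkcont.comp ((continuous_snd.sub continuous_fst).const_smul ε⁻¹))
      have hint : Integrable (Function.uncurry fun x y : V =>
          f y * k (ε⁻¹ • (y - x))) (ρ.prod volume) := by
        have huc : (Function.uncurry fun x y : V => (f : V → ℝ) y * k (ε⁻¹ • (y - x)))
            = fun p : V × V => (f : V → ℝ) p.2 * k (ε⁻¹ • (p.2 - p.1)) := rfl
        rw [huc, integrable_prod_iff hFcont.aestronglyMeasurable]
        constructor
        · refine Filter.Eventually.of_forall fun x => ?_
          exact (hsect ε hε.ne' x).bdd_mul (c := ‖f‖) f.continuous.aestronglyMeasurable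
            (Filter.Eventually.of_forall f.norm_coe_le_norm)
        · apply (integrable_const (‖f‖ * (|((ε⁻¹) ^ Module.finrank ℝ V)⁻¹| * Z))).mono'
          · exact hFcont.norm.aestronglyMeasurable.integral_prod_right'
          · refine Filter.Eventually.of_forall fun x => ?_
            have hle : ‖∫ y : V, ‖f y * k (ε⁻¹ • (y - x))‖‖
                ≤ ∫ y : V, ‖f‖ * k (ε⁻¹ • (y - x)) := by
              apply norm_integral_le_of_norm_le ((hsect ε hε.ne' x).const_mul ‖f‖)
              refine Filter.Eventually.of_forall fun y => ?_
              rw [norm_norm, norm_mul, Real.norm_eq_abs (k _), _root_.abs_of_nonneg (hknonneg _)]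
              exact mul_le_mul_of_nonneg_right (f.norm_coe_le_norm _) (hknonneg _)
            refine hle.trans ?_
            rw [integral_const_mul, hval ε hε.ne' x, smul_eq_mul]
      have hswap : (∫ x, (∫ y : V, (f : V → ℝ) y * k (ε⁻¹ • (y - x))) ∂ρ)
          = ∫ y : V, (∫ x, (f : V → ℝ) y * k (ε⁻¹ • (y - x)) ∂ρ) :=
        MeasureTheory.integral_integral_swap hint
      rw [hswap]
      apply integral_congr_ae (Filter.Eventually.of_forall fun y => ?_)
      rw [integral_const_mul]
      congr 1
      apply integral_congr_ae (Filter.Eventually.of_forall fun x => ?_)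
      rw [hker]
    rw [key μ ‹_›, key ν ‹_›]
    congr 1
    apply integral_congr_ae (Filter.Eventually.of_forall fun y => ?_)
    rw [cw_gauss_eq h hb' y]
  -- the mollified integrals converge to the original
  have hbnd : ∀ (ε : ℝ) (x : V), ‖∫ v : V, f (x + ε • v) * k v‖ ≤ ‖f‖ * Z := by
    intro ε x
    have h1 : ‖∫ v : V, f (x + ε • v) * k v‖ ≤ ∫ v : V, ‖f‖ * k v :=
      norm_integral_le_of_norm_le (hkint.const_mul ‖f‖) (Filter.Eventually.of_forall fun v => by
        rw [norm_mul, Real.norm_eq_abs (k v), _root_.abs_of_nonneg (hknonneg v)]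
        exact mul_le_mul_of_nonneg_right (f.norm_coe_le_norm _) (hknonneg v))
    rwa [integral_const_mul] at h1
  have hJlim : ∀ ρ : Measure V, IsProbabilityMeasure ρ →
      Filter.Tendsto (fun m : ℕ => ∫ x, (∫ v : V, f (x + (1 / (m + 1) : ℝ) • v) * k v) ∂ρ)
        Filter.atTop (𝓝 (Z * ∫ x, f x ∂ρ)) := by
    intro ρ hρ
    have hin : ∀ (ε : ℝ) (x : V), AEStronglyMeasurable (fun v : V => f (x + ε • v) * k v) volume :=
      fun ε x => ((f.continuous.comp (continuous_const.add
        (continuous_id.const_smul ε))).mul hkcont).aestronglyMeasurable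
    have hcontF : ∀ ε : ℝ, Continuous fun x : V => ∫ v : V, f (x + ε • v) * k v := by
      intro ε
      apply continuous_of_dominated (fun x => hin ε x) (bound := fun v => ‖f‖ * k v)
      · intro x
        refine Filter.Eventually.of_forall fun v => ?_
        rw [norm_mul, Real.norm_eq_abs (k v), _root_.abs_of_nonneg (hknonneg v)]
        exact mul_le_mul_of_nonneg_right (f.norm_coe_le_norm _) (hknonneg v)
      · exact hkint.const_mul ‖f‖
      · refine Filter.Eventually.of_forall fun v => ?_
        exact (f.continuous.comp (continuous_id.add continuous_const)).mul continuous_const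
    have hZrw : ∀ x : V, f x * Z = ∫ v : V, f x * k v := fun x => (integral_const_mul _ _).symm
    have hptlim : ∀ x : V, Filter.Tendsto
        (fun m : ℕ => ∫ v : V, f (x + (1 / (m + 1) : ℝ) • v) * k v)
        Filter.atTop (𝓝 (f x * Z)) := by
      intro x
      rw [show f x * Z = ∫ v : V, f x * k v from hZrw x]
      apply tendsto_integral_of_dominated_convergence (fun v => ‖f‖ * k v)
        (fun m => hin _ x) (hkint.const_mul ‖f‖)
      · intro m
        refine Filter.Eventually.of_forall fun v => ?_
        rw [norm_mul, Real.norm_eq_abs (k v), _root_.abs_of_nonneg (hknonneg v)]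
        exact mul_le_mul_of_nonneg_right (f.norm_coe_le_norm _) (hknonneg v)
      · refine Filter.Eventually.of_forall fun v => ?_
        have harg : Filter.Tendsto (fun m : ℕ => x + (1 / (m + 1) : ℝ) • v)
            Filter.atTop (𝓝 x) := by
          have h0 : Filter.Tendsto (fun m : ℕ => (1 / (m + 1) : ℝ) • v)
              Filter.atTop (𝓝 (0 : V)) := by
            have := (tendsto_one_div_add_atTop_nhds_zero_nat (𝕜 := ℝ)).smul_const v
            simpa using this
          simpa using tendsto_const_nhds.add h0
        exact ((f.continuous.tendsto x).comp harg).mul_const (k v)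
    have hfinal := tendsto_integral_of_dominated_convergence (μ := ρ)
      (F := fun m x => ∫ v : V, f (x + (1 / (m + 1) : ℝ) • v) * k v)
      (f := fun x => f x * Z) (fun _ => ‖f‖ * Z)
      (fun m => (hcontF _).aestronglyMeasurable) (integrable_const _)
      (fun m => Filter.Eventually.of_forall fun x => hbnd _ x)
      (Filter.Eventually.of_forall hptlim)
    have : ∫ x, f x * Z ∂ρ = Z * ∫ x, f x ∂ρ := by
      rw [integral_mul_const, mul_comm]
    rwa [this] at hfinal
  have h2' := (hJlim ν ‹_›).congr
    (fun m : ℕ => (hJeq (1 / ((m : ℝ) + 1)) (by positivity)).symm)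
  have := tendsto_nhds_unique (hJlim μ ‹_›) h2'
  exact mul_left_cancel₀ hZpos.ne' this

theorem cw_main (μ ν : Measure V) [IsProbabilityMeasure μ] [IsProbabilityMeasure ν]
    (h : ∀ a : V, μ.map (fun x => ⟪a, x⟫) = ν.map (fun x => ⟪a, x⟫)) : μ = ν := by
  apply ext_of_forall_lintegral_eq_of_IsFiniteMeasure
  intro f
  have hlip : LipschitzWith 1 (fun x : NNReal => (x : ℝ)) := isometry_subtype_coe.lipschitz
  set g : BoundedContinuousFunction V ℝ := f.comp _ hlip with hg
  have hgint : ∀ ρ : Measure V, IsProbabilityMeasure ρ →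
      Integrable (fun x => ((f x : NNReal) : ℝ)) ρ := fun ρ _ =>
    BoundedContinuousFunction.integrable ρ g
  rw [lintegral_coe_eq_integral (fun x => f x) (hgint μ ‹_›),
    lintegral_coe_eq_integral (fun x => f x) (hgint ν ‹_›)]
  congr 1
  exact cw_integral_bcf_eq h g
end CW


lemma mpow_mul_pos_s18 {d : ℕ} (A : Matrix (Fin d) (Fin d) ℝ) {x y : ℝ} (hx : 0 < x) (hy : 0 < y) :
    mpow A (x * y) = mpow A x * mpow A y := by
  unfold mpow
  rw [Real.log_mul hx.ne' hy.ne', add_smul]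
  exact Matrix.exp_add_of_commute _ _ (((Commute.refl A).smul_left _).smul_right _)

lemma exp_smul_one' {d : ℕ} (r : ℝ) :
    NormedSpace.exp (r • (1 : Matrix (Fin d) (Fin d) ℝ)) = Real.exp r • 1 := by
  have h1 : r • (1 : Matrix (Fin d) (Fin d) ℝ) = Matrix.diagonal (fun _ => r) := by
    rw [Matrix.smul_one_eq_diagonal]
  have h2 : Real.exp r • (1 : Matrix (Fin d) (Fin d) ℝ)
      = Matrix.diagonal (fun _ => Real.exp r) := by
    rw [Matrix.smul_one_eq_diagonal]
  rw [h1, h2, Matrix.exp_diagonal, Pi.exp_def]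
  congr 1
  funext i
  rw [Real.exp_eq_exp_ℝ]

lemma mpow_sub_half {d : ℕ} (D : Matrix (Fin d) (Fin d) ℝ) {c : ℝ} (hc : 0 < c) :
    mpow (D - (2⁻¹ : ℝ) • 1) c = Real.exp (-(Real.log c * 2⁻¹)) • mpow D c := by
  unfold mpow
  have h1 : Real.log c • (D - (2⁻¹ : ℝ) • (1 : Matrix (Fin d) (Fin d) ℝ))
      = Real.log c • D + (-(Real.log c * 2⁻¹)) • (1 : Matrix (Fin d) (Fin d) ℝ) := by
    rw [smul_sub, smul_smul, sub_eq_add_neg, ← neg_smul]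
  rw [h1, Matrix.exp_add_of_commute _ _ (((Commute.one_right _).smul_left _).smul_right _),
    exp_smul_one']
  rw [mul_smul_comm, mul_one]

lemma mpowPos_scale {d : ℕ} (D : Matrix (Fin d) (Fin d) ℝ) {c : ℝ} (hc : 0 < c) (x : ℝ) :
    mpowPos (D - (2⁻¹ : ℝ) • 1) (c * x)
      = Real.exp (-(Real.log c * 2⁻¹)) • (mpow D c * mpowPos (D - (2⁻¹ : ℝ) • 1) x) := by
  unfold mpowPos
  by_cases hx : 0 < x
  · rw [if_pos (mul_pos hc hx), if_pos hx, mpow_mul_pos_s18 _ hc hx, mpow_sub_half D hc,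
      Matrix.smul_mul]
  · rw [if_neg (fun h => hx (by nlinarith)), if_neg hx,
      mul_zero, smul_zero]

lemma kernel_pair {d : ℕ} (D : Matrix (Fin d) (Fin d) ℝ) {c : ℝ} (hc : 0 < c)
    {ti tj : ℝ} (hti : 0 ≤ ti) (htj : 0 ≤ tj) (a b : Fin d → ℝ) :
    ∫ u in Set.Ioc (0 : ℝ) (min (c * ti) (c * tj)),
        ((mpowPos (D - (2⁻¹ : ℝ) • 1) (c * ti - u)).transpose.mulVec a) ⬝ᵥ
          ((mpowPos (D - (2⁻¹ : ℝ) • 1) (c * tj - u)).transpose.mulVec b)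
      = ∫ u in Set.Ioc (0 : ℝ) (min ti tj),
        ((mpowPos (D - (2⁻¹ : ℝ) • 1) (ti - u)).transpose.mulVec
            ((mpow D c).transpose.mulVec a)) ⬝ᵥ
          ((mpowPos (D - (2⁻¹ : ℝ) • 1) (tj - u)).transpose.mulVec
            ((mpow D c).transpose.mulVec b)) := by
  set e := Real.exp (-(Real.log c * 2⁻¹)) with he
  have hmin : min (c * ti) (c * tj) = c * min ti tj := by
    rcases le_total ti tj with h | h
    · rw [min_eq_left h, min_eq_left (by nlinarith)]
    · rw [min_eq_right h, min_eq_right (by nlinarith)]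
  set s := min ti tj with hs
  have hs0 : 0 ≤ s := le_min hti htj
  have hkey : ∀ (t' : ℝ) (v : Fin d → ℝ) (x : ℝ),
      (mpowPos (D - (2⁻¹ : ℝ) • 1) (c * t' - c * x)).transpose.mulVec v
        = e • (mpowPos (D - (2⁻¹ : ℝ) • 1) (t' - x)).transpose.mulVec
            ((mpow D c).transpose.mulVec v) := by
    intro t' v x
    rw [← mul_sub, mpowPos_scale D hc, Matrix.transpose_smul, Matrix.transpose_mul,
      Matrix.smul_mulVec, ← Matrix.mulVec_mulVec]
  have hee : e * e = c⁻¹ := by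
    rw [he, ← Real.exp_add, ← Real.exp_log (show (0:ℝ) < c⁻¹ from by positivity), Real.log_inv]
    ring_nf
  rw [hmin, ← intervalIntegral.integral_of_le (by positivity : (0:ℝ) ≤ c * s),
    ← intervalIntegral.integral_of_le hs0]
  have hsub := intervalIntegral.smul_integral_comp_mul_left
    (a := (0:ℝ)) (b := s)
    (fun u => ((mpowPos (D - (2⁻¹ : ℝ) • 1) (c * ti - u)).transpose.mulVec a) ⬝ᵥ
          ((mpowPos (D - (2⁻¹ : ℝ) • 1) (c * tj - u)).transpose.mulVec b)) c
  rw [mul_zero] at hsub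
  rw [← hsub]
  have hpt : ∀ x : ℝ,
      ((mpowPos (D - (2⁻¹ : ℝ) • 1) (c * ti - c * x)).transpose.mulVec a) ⬝ᵥ
          ((mpowPos (D - (2⁻¹ : ℝ) • 1) (c * tj - c * x)).transpose.mulVec b)
        = c⁻¹ * (((mpowPos (D - (2⁻¹ : ℝ) • 1) (ti - x)).transpose.mulVec
            ((mpow D c).transpose.mulVec a)) ⬝ᵥ
          ((mpowPos (D - (2⁻¹ : ℝ) • 1) (tj - x)).transpose.mulVec
            ((mpow D c).transpose.mulVec b))) := by
    intro x
    rw [hkey ti a x, hkey tj b x, smul_dotProduct, dotProduct_smul,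
      smul_eq_mul, smul_eq_mul, ← mul_assoc, hee]
  rw [intervalIntegral.integral_congr (g := fun x => c⁻¹ * (((mpowPos (D - (2⁻¹ : ℝ) • 1) (ti - x)).transpose.mulVec
            ((mpow D c).transpose.mulVec a)) ⬝ᵥ
          ((mpowPos (D - (2⁻¹ : ℝ) • 1) (tj - x)).transpose.mulVec
            ((mpow D c).transpose.mulVec b)))) (fun x _ => hpt x),
    intervalIntegral.integral_const_mul, smul_eq_mul, ← mul_assoc,
    mul_inv_cancel₀ hc.ne', one_mul]


noncomputable def piEquiv (m d : ℕ) : (Fin m → Fin d → ℝ) ≃ᵐ ((Fin m × Fin d) → ℝ) :=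
{ toEquiv := ⟨fun x p => x p.1 p.2, fun y i j => y (i, j), fun _ => rfl, fun _ => rfl⟩,
  measurable_toFun := measurable_pi_lambda _ fun p =>
    (measurable_pi_apply p.2).comp (measurable_pi_apply p.1),
  measurable_invFun := measurable_pi_lambda _ fun i =>
    measurable_pi_lambda _ fun j => measurable_pi_apply (i, j) }


/-- RL-OFBM is operator self-similar with exponent `D`.
The Wiener-integral definition `X(t) = ∫_0^t (t-u)^{D-I/2} dW(u)` is encoded through its
distributional content: every finite linear functional of the process is a centered Gaussian
whose variance is given by the covariance kernel of the Wiener integral. -/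
theorem RL_OFBM_operator_self_similar (d : ℕ) (D : Matrix (Fin d) (Fin d) ℝ)
    (hmin : 1 / 2 < specMin D) (hmax : specMax D < 1)
    {Ω : Type*} [MeasurableSpace Ω] (μ : Measure Ω) [IsProbabilityMeasure μ]
    (X : ℝ → Ω → (Fin d → ℝ)) (hXmeas : ∀ t, Measurable (X t))
    (hgauss : ∀ (m : ℕ) (t : Fin m → ℝ), (∀ i, 0 ≤ t i) → ∀ a : Fin m → (Fin d → ℝ),
      Measure.map (fun ω => ∑ i, a i ⬝ᵥ X (t i) ω) μ =
        gaussianReal 0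
          (Real.toNNReal (∑ i, ∑ j,
            ∫ u in Set.Ioc (0 : ℝ) (min (t i) (t j)),
              ((mpowPos (D - (2⁻¹ : ℝ) • 1) (t i - u)).transpose.mulVec (a i)) ⬝ᵥ
                ((mpowPos (D - (2⁻¹ : ℝ) • 1) (t j - u)).transpose.mulVec (a j))))) :
    ∀ c : ℝ, 0 < c → ∀ (m : ℕ) (t : Fin m → ℝ), (∀ i, 0 ≤ t i) →
      Measure.map (fun ω => fun i => X (c * t i) ω) μ =
        Measure.map (fun ω => fun i => (mpow D c).mulVec (X (t i) ω)) μ := by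
  intro c hc m t ht
  classical
  have hF : Measurable (fun ω => fun i => X (c * t i) ω) :=
    measurable_pi_lambda _ fun i => hXmeas (c * t i)
  have hG : Measurable (fun ω => fun i => (mpow D c).mulVec (X (t i) ω)) := by
    refine measurable_pi_lambda _ fun i => measurable_pi_lambda _ fun j => ?_
    simp only [Matrix.mulVec, dotProduct]
    exact Finset.measurable_sum _ fun k _ =>
      (measurable_const.mul ((measurable_pi_apply k).comp (hXmeas (t i))))
  set e : (Fin m → Fin d → ℝ) ≃ᵐ EuclideanSpace ℝ (Fin m × Fin d) :=
    (piEquiv m d).trans (MeasurableEquiv.toLp 2 ((Fin m × Fin d) → ℝ)) with hedef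
  have hF' : Measurable fun ω => e (fun i => X (c * t i) ω) := e.measurable.comp hF
  have hG' : Measurable fun ω => e (fun i => (mpow D c).mulVec (X (t i) ω)) :=
    e.measurable.comp hG
  suffices hmain : Measure.map (fun ω => e (fun i => X (c * t i) ω)) μ
      = Measure.map (fun ω => e (fun i => (mpow D c).mulVec (X (t i) ω))) μ by
    have h1 := congrArg (Measure.map ⇑e.symm) hmain
    rw [Measure.map_map e.symm.measurable hF',
        Measure.map_map e.symm.measurable hG'] at h1
    simpa [Function.comp_def] using h1
  haveI hP1 : IsProbabilityMeasure (Measure.map (fun ω => e (fun i => X (c * t i) ω)) μ) :=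
    Measure.isProbabilityMeasure_map hF'.aemeasurable
  haveI hP2 : IsProbabilityMeasure
      (Measure.map (fun ω => e (fun i => (mpow D c).mulVec (X (t i) ω))) μ) :=
    Measure.isProbabilityMeasure_map hG'.aemeasurable
  apply cw_main
  intro a
  set a' : Fin m → Fin d → ℝ := fun i j => a (i, j) with ha'
  have hinner : Measurable fun x : EuclideanSpace ℝ (Fin m × Fin d) => ⟪a, x⟫ :=
    (continuous_const.inner continuous_id).measurable
  rw [Measure.map_map hinner hF', Measure.map_map hinner hG']
  have hLfun : ((fun x : EuclideanSpace ℝ (Fin m × Fin d) => ⟪a, x⟫)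
        ∘ fun ω => e (fun i => X (c * t i) ω))
      = fun ω => ∑ i, a' i ⬝ᵥ X (c * t i) ω := by
    funext ω
    simp only [Function.comp_apply, PiLp.inner_apply, RCLike.inner_apply, conj_trivial]
    rw [Fintype.sum_prod_type]
    simp only [dotProduct]
    exact Finset.sum_congr rfl fun i _ => Finset.sum_congr rfl fun j _ => mul_comm _ _
  have hRfun : ((fun x : EuclideanSpace ℝ (Fin m × Fin d) => ⟪a, x⟫)
        ∘ fun ω => e (fun i => (mpow D c).mulVec (X (t i) ω)))
      = fun ω => ∑ i, ((mpow D c).transpose.mulVec (a' i)) ⬝ᵥ X (t i) ω := by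
    funext ω
    simp only [Function.comp_apply, PiLp.inner_apply, RCLike.inner_apply, conj_trivial]
    rw [Fintype.sum_prod_type]
    refine Finset.sum_congr rfl fun i _ => ?_
    rw [Matrix.mulVec_transpose, ← dotProduct_mulVec]
    simp only [dotProduct]
    exact Finset.sum_congr rfl fun j _ => mul_comm _ _
  rw [hLfun, hRfun]
  rw [hgauss m (fun i => c * t i) (fun i => mul_nonneg hc.le (ht i)) a',
      hgauss m t ht (fun i => (mpow D c).transpose.mulVec (a' i))]
  congr 1
  congr 1
  apply Finset.sum_congr rfl
  intro i _
  apply Finset.sum_congr rfl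
  intro j _
  exact kernel_pair D hc (ht i) (ht j) (a' i) (a' j)
end CW
end
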